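/- Let ε > 0, let H be a symmetric n×n real matrix with ‖H‖ ≤ M, and set H̄ = H + 2εI. Let y_j, r_j, p_j (j = 0,…,Ĵ+1) be CG iterates for H̄ and g ≠ 0, well defined with p_jᵀ H̄ p_j > 0 and r_j ≠ 0 for j = 0,…,Ĵ−1, and suppose p_Ĵᵀ H̄ p_Ĵ ≥ ε‖p_Ĵ‖² with p_Ĵ ≠ 0. Then q(y_Ĵ) − q(y_{Ĵ+1}) ≥ (ε / (2(M+2ε)²)) ‖r_Ĵ‖². -/

import Mathlib

open RealInnerProductSpace

set_option maxHeartbeats 1000000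

/-- The decrease in the CG quadratic at step `Ĵ` is at least
`(ε / (2(M+2ε)²)) ‖r_Ĵ‖²`. -/
theorem stmt3
    {n : ℕ} (H : EuclideanSpace ℝ (Fin n) →L[ℝ] EuclideanSpace ℝ (Fin n))
    (hsym : ∀ x y : EuclideanSpace ℝ (Fin n), ⟪H x, y⟫ = ⟪x, H y⟫)
    (ε M : ℝ) (hε : 0 < ε) (hM : ‖H‖ ≤ M)
    (Hb : EuclideanSpace ℝ (Fin n) →L[ℝ] EuclideanSpace ℝ (Fin n))
    (hHb : ∀ x : EuclideanSpace ℝ (Fin n), Hb x = H x + (2*ε) • x)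
    (g : EuclideanSpace ℝ (Fin n)) (hg : g ≠ 0)
    (q : EuclideanSpace ℝ (Fin n) → ℝ)
    (hq : ∀ z, q z = 1/2 * ⟪z, Hb z⟫ + ⟪g, z⟫)
    (J : ℕ)
    (y r p : ℕ → EuclideanSpace ℝ (Fin n)) (α : ℕ → ℝ)
    (hy0 : y 0 = 0) (hr0 : r 0 = g) (hp0 : p 0 = -g)
    (hα : ∀ j ≤ J, α j = ‖r j‖^2 / ⟪p j, Hb (p j)⟫)
    (hyrec : ∀ j ≤ J, y (j+1) = y j + α j • p j)
    (hrrec : ∀ j ≤ J, r (j+1) = r j + α j • Hb (p j))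
    (hprec : ∀ j ≤ J, p (j+1) = -(r (j+1)) + (‖r (j+1)‖^2 / ‖r j‖^2) • p j)
    (hpcurv : ∀ j < J, 0 < ⟪p j, Hb (p j)⟫)
    (hrne : ∀ j < J, r j ≠ 0)
    (hpJcurv : ⟪p J, Hb (p J)⟫ ≥ ε * ‖p J‖^2)
    (hpJ : p J ≠ 0) :
    q (y J) - q (y (J+1)) ≥ ε / (2 * (M + 2*ε)^2) * ‖r J‖^2 := by
  have hM0 : (0:ℝ) ≤ M := le_trans (norm_nonneg H) hM
  have hMe : (0:ℝ) < M + 2*ε := by linarith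
  -- symmetry of Hb
  have hsymb : ∀ x z : EuclideanSpace ℝ (Fin n), ⟪Hb x, z⟫ = ⟪x, Hb z⟫ := by
    intro x z
    rw [hHb, hHb, inner_add_left, inner_add_right, real_inner_smul_left,
      real_inner_smul_right, hsym]
  -- norm bound on Hb
  have hHbnorm : ∀ x : EuclideanSpace ℝ (Fin n), ‖Hb x‖ ≤ (M + 2*ε) * ‖x‖ := by
    intro x
    rw [hHb]
    have h1 := H.le_opNorm x
    have h2 : ‖H x + (2*ε) • x‖ ≤ ‖H x‖ + ‖(2*ε) • x‖ := norm_add_le _ _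
    rw [norm_smul, Real.norm_eq_abs, abs_of_pos (by linarith : (0:ℝ) < 2*ε)] at h2
    nlinarith [norm_nonneg x]
  set c : ℝ := ⟪p J, Hb (p J)⟫ with hc
  clear_value c
  have hpJn : (0:ℝ) < ‖p J‖ := norm_pos_iff.mpr hpJ
  have hcpos : 0 < c := lt_of_lt_of_le (mul_pos hε (pow_pos hpJn 2)) hpJcurv
  set R : ℝ := ‖r J‖^2 with hR
  clear_value R
  have hRnn : (0:ℝ) ≤ R := by rw [hR]; positivity
  -- main CG induction: ⟪p j, r j⟫ = -‖r j‖² and conjugacy of successive directions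
  have key : ∀ j, j ≤ J → ⟪p j, r j⟫ = -‖r j‖^2 ∧
      (∀ i, j = i + 1 → ⟪p i, Hb (p j)⟫ = 0) := by
    intro j
    induction j with
    | zero =>
      intro _
      constructor
      · rw [hp0, hr0, inner_neg_left, real_inner_self_eq_norm_sq]
      · intro i hi; omega
    | succ j ih =>
      intro hj1
      have hjJ : j ≤ J := by omega
      have hjlt : j < J := by omega
      obtain ⟨hA, hC⟩ := ih hjJ
      have hcj : (0:ℝ) < ⟪p j, Hb (p j)⟫ := hpcurv j hjlt
      have hrj : r j ≠ 0 := hrne j hjlt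
      have hrj2 : (0:ℝ) < ‖r j‖^2 := pow_pos (norm_pos_iff.mpr hrj) 2
      have hαj : α j = ‖r j‖^2 / ⟪p j, Hb (p j)⟫ := hα j hjJ
      -- ⟪p j, r (j+1)⟫ = 0
      have hD : ⟪p j, r (j+1)⟫ = 0 := by
        rw [hrrec j hjJ, inner_add_right, real_inner_smul_right, hA, hαj,
          div_mul_cancel₀ _ (ne_of_gt hcj)]
        ring
      -- ⟪r j, Hb (p j)⟫ = -⟪p j, Hb (p j)⟫
      have hrHp : ⟪r j, Hb (p j)⟫ = -⟪p j, Hb (p j)⟫ := by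
        match j, hC with
        | 0, _ =>
          have : r 0 = -(p 0) := by rw [hp0, hr0, neg_neg]
          rw [this, inner_neg_left]
        | (i+1), hC =>
          have hiJ : i ≤ J := by omega
          have hrexp : r (i+1) = -(p (i+1)) + (‖r (i+1)‖^2 / ‖r i‖^2) • p i := by
            rw [hprec i hiJ]; abel
          rw [hrexp, inner_add_left, inner_neg_left, real_inner_smul_left,
            hC i rfl]
          ring
      -- ⟪r j, r (j+1)⟫ = 0
      have hB : ⟪r j, r (j+1)⟫ = 0 := by
        rw [hrrec j hjJ, inner_add_right, real_inner_smul_right, hrHp,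
          real_inner_self_eq_norm_sq, hαj, div_mul_eq_mul_div,
          mul_neg, neg_div, mul_div_assoc, div_self (ne_of_gt hcj)]
        ring
      constructor
      · -- ⟪p (j+1), r (j+1)⟫ = -‖r (j+1)‖²
        rw [hprec j hjJ, inner_add_left, inner_neg_left, real_inner_smul_left,
          real_inner_self_eq_norm_sq, hD]
        ring
      · -- conjugacy ⟪p j, Hb (p (j+1))⟫ = 0
        intro i hi
        have hij : i = j := by omega
        subst hij
        have hαne : α i ≠ 0 := by
          rw [hαj]; exact ne_of_gt (div_pos hrj2 hcj)
        have hHp : Hb (p i) = (α i)⁻¹ • (r (i+1) - r i) := by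
          rw [hrrec i hjJ]
          rw [add_sub_cancel_left, smul_smul, inv_mul_cancel₀ hαne, one_smul]
        have e1 : ⟪Hb (p i), r (i+1)⟫ = (α i)⁻¹ * ‖r (i+1)‖^2 := by
          rw [hHp, real_inner_smul_left, inner_sub_left,
            real_inner_self_eq_norm_sq, hB]
          ring
        rw [← hsymb, hprec i hjJ, inner_add_right, inner_neg_right,
          real_inner_smul_right, e1, hsymb, hαj]
        have hcne : ⟪p i, Hb (p i)⟫ ≠ 0 := ne_of_gt hcj
        have hrne2 : ‖r i‖^2 ≠ 0 := ne_of_gt hrj2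
        field_simp
        ring
  have hAJ : ⟪p J, r J⟫ = -R := by rw [hR]; exact (key J le_rfl).1
  -- residual invariant
  have hry : ∀ j, j ≤ J → r j = Hb (y j) + g := by
    intro j
    induction j with
    | zero => intro _; rw [hy0, hr0, map_zero, zero_add]
    | succ j ih =>
      intro hj1
      have hjJ : j ≤ J := by omega
      rw [hrrec j hjJ, hyrec j hjJ, map_add, map_smul, ih hjJ]
      abel
  -- the decrease formula
  have hαJ : α J = R / c := by rw [hR, hc]; exact hα J le_rfl
  have hdec : q (y J) - q (y (J+1)) = R^2 / (2*c) := by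
    have hrJ : r J = Hb (y J) + g := hry J le_rfl
    have h1 : ⟪y J, Hb (p J)⟫ = ⟪p J, Hb (y J)⟫ := by
      rw [← hsymb]; exact real_inner_comm _ _
    have expand : q (y (J+1)) =
        q (y J) + α J * ⟪p J, r J⟫ + α J^2/2 * ⟪p J, Hb (p J)⟫ := by
      rw [hq, hq, hyrec J le_rfl, map_add, map_smul, hrJ]
      rw [inner_add_left, inner_add_right, inner_add_right, real_inner_smul_left,
        real_inner_smul_right, real_inner_smul_right, real_inner_smul_left,
        inner_add_right, real_inner_smul_right, inner_add_right,
        real_inner_comm (p J) g, h1]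
      ring
    have hcne : c ≠ 0 := ne_of_gt hcpos
    rw [expand, hAJ, hαJ, ← hc]
    field_simp
    ring
  -- bound c ≤ (M+2ε)²/ε * R
  have hcle : c ≤ (M + 2*ε)^2 / ε * R := by
    rcases Nat.eq_zero_or_pos J with hJ0 | hJpos
    · subst hJ0
      have hcR : c = ⟪r 0, Hb (r 0)⟫ := by
        rw [hc, hp0, hr0, map_neg, inner_neg_neg]
      have : c ≤ (M + 2*ε) * R := by
        rw [hcR]
        calc ⟪r 0, Hb (r 0)⟫ ≤ ‖r 0‖ * ‖Hb (r 0)‖ := real_inner_le_norm _ _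
          _ ≤ ‖r 0‖ * ((M + 2*ε) * ‖r 0‖) := by
              gcongr; exact hHbnorm _
          _ = (M + 2*ε) * R := by rw [hR]; ring
      have h1 : M + 2*ε ≤ (M + 2*ε)^2 / ε := by
        rw [le_div_iff₀ hε, sq]
        nlinarith
      nlinarith
    · obtain ⟨i, rfl⟩ : ∃ i, J = i + 1 := ⟨J - 1, by omega⟩
      set J := i + 1
      have hconj : ⟪p i, Hb (p J)⟫ = 0 := (key J le_rfl).2 i rfl
      have hrexp : r J = -(p J) + (‖r J‖^2 / ‖r i‖^2) • p i := by
        rw [hprec i (by omega)]; abel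
      have hcr : ⟪r J, Hb (p J)⟫ = -c := by
        rw [hrexp, inner_add_left, inner_neg_left, real_inner_smul_left, hconj, hc]
        ring
      have hcle1 : c ≤ (M + 2*ε) * ‖r J‖ * ‖p J‖ := by
        have : -⟪r J, Hb (p J)⟫ ≤ ‖r J‖ * ‖Hb (p J)‖ := by
          have := abs_real_inner_le_norm (r J) (Hb (p J))
          have := neg_abs_le ⟪r J, Hb (p J)⟫
          linarith [abs_real_inner_le_norm (r J) (Hb (p J))]
        rw [hcr, neg_neg] at this
        calc c ≤ ‖r J‖ * ‖Hb (p J)‖ := this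
          _ ≤ ‖r J‖ * ((M + 2*ε) * ‖p J‖) := by gcongr; exact hHbnorm _
          _ = (M + 2*ε) * ‖r J‖ * ‖p J‖ := by ring
      have hp2 : ε * ‖p J‖^2 ≤ c := hpJcurv
      have hsq : c * c ≤ (M + 2*ε)^2 * R * ‖p J‖^2 := by
        have h0 : 0 ≤ (M + 2*ε) * ‖r J‖ * ‖p J‖ := by positivity
        calc c * c ≤ ((M + 2*ε) * ‖r J‖ * ‖p J‖) * ((M + 2*ε) * ‖r J‖ * ‖p J‖) := by
              nlinarith [hcle1, hcpos.le]
          _ = (M + 2*ε)^2 * R * ‖p J‖^2 := by rw [hR]; ring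
      have hAnn : (0:ℝ) ≤ (M + 2*ε)^2 * R := mul_nonneg (by positivity) hRnn
      have hkey : (c * ε) * c ≤ ((M + 2*ε)^2 * R) * c := by
        nlinarith [hsq, mul_le_mul_of_nonneg_left hp2 hAnn]
      rw [div_mul_eq_mul_div, le_div_iff₀ hε]
      exact le_of_mul_le_mul_right hkey hcpos
  -- finish
  have hRpos : 0 < R := by
    by_contra h
    push_neg at h
    have hR0 : R = 0 := le_antisymm h hRnn
    rw [hR0, mul_zero] at hcle
    linarith
  rw [hdec]
  rw [ge_iff_le, div_mul_eq_mul_div, div_le_div_iff₀ (by positivity) (by positivity)]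
  have hstep : ε * R * (2 * c) ≤ ε * R * (2 * ((M + 2*ε)^2 / ε * R)) := by
    gcongr
  have heq : ε * R * (2 * ((M + 2*ε)^2 / ε * R)) = R^2 * (2 * (M + 2*ε)^2) := by
    field_simp
  linarith
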